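/- Let B be a finite A-algebra (finitely generated as an A-module). Suppose there exists a commutative A-algebra A' such that the induced map Spec(A') → Spec(A) is surjective (every prime ideal of A is the contraction of a prime ideal of A') and such that A' ⊗_A B is a simple A'-algebra. Then B is locally simple over A; that is, flatness of the base change is superfluous. -/

import Mathlib

open TensorProduct

universe u

/-- An `A`-algebra `B` is *simple* (monogenic) if it is generated by a single element,
and *locally simple* if there is a faithfully flat commutative `A`-algebra `A'` such that
`A' ⊗[A] B` is a simple `A'`-algebra. -/
def Algebra.IsLocallySimple (A B : Type u) [CommRing A] [CommRing B] [Algebra A B] : Prop :=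
  ∃ (A' : Type u) (_ : CommRing A') (_ : Algebra A A'),
    Module.FaithfullyFlat A A' ∧ ∃ x : A' ⊗[A] B, Algebra.adjoin A' {x} = ⊤

section Aux

variable {A B : Type u} [CommRing A] [CommRing B] [Algebra A B]

/-- If `b` generates `B` as an `A`-module, then `1 ⊗ b i` generates `C ⊗[A] B`
as a `C`-module. -/
lemma aux_span_tmul_top {n : ℕ} {b : Fin n → B}
    (hb : Submodule.span A (Set.range b) = ⊤)
    (C : Type*) [CommRing C] [Algebra A C] :
    Submodule.span C (Set.range fun i => (1 : C) ⊗ₜ[A] b i) = ⊤ := by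
  rw [eq_top_iff]
  rintro z -
  have key : ∀ β : B,
      (1 : C) ⊗ₜ[A] β ∈ Submodule.span C (Set.range fun i => (1 : C) ⊗ₜ[A] b i) := by
    intro β
    have hβ : β ∈ Submodule.span A (Set.range b) := hb ▸ Submodule.mem_top
    induction hβ using Submodule.span_induction with
    | mem x h => obtain ⟨i, rfl⟩ := h; exact Submodule.subset_span ⟨i, rfl⟩
    | zero => rw [TensorProduct.tmul_zero]; exact zero_mem _
    | add x y hx hy ihx ihy => rw [TensorProduct.tmul_add]; exact add_mem ihx ihy
    | smul a x hx ih =>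
        rw [TensorProduct.tmul_smul, ← algebraMap_smul C a]
        exact Submodule.smul_mem _ _ ih
  induction z using TensorProduct.induction_on with
  | zero => exact zero_mem _
  | tmul c β =>
      have h : c ⊗ₜ[A] β = c • ((1 : C) ⊗ₜ[A] β) := by
        rw [smul_tmul', smul_eq_mul, mul_one]
      rw [h]; exact Submodule.smul_mem _ _ (key β)
  | add x y hx hy => exact add_mem hx hy

/-- If `adjoin C {y} = ⊤` then the powers of `y` span. -/
lemma aux_span_pow {C T : Type*} [CommRing C] [CommRing T] [Algebra C T] {y : T}
    (h : Algebra.adjoin C {y} = ⊤) :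
    Submodule.span C (Set.range fun k : ℕ => y ^ k) = ⊤ := by
  have h2 := Algebra.adjoin_eq_span C {y}
  rw [h] at h2
  rw [eq_top_iff]
  rintro z -
  have hz : z ∈ Submodule.span C ((Submonoid.closure {y} : Submonoid T) : Set T) := by
    rw [← h2]; exact (Subalgebra.mem_toSubmodule _).mpr Algebra.mem_top
  refine Submodule.span_le.mpr ?_ hz
  rintro w hw
  obtain ⟨k, rfl⟩ := Submonoid.mem_closure_singleton.mp hw
  exact Submodule.subset_span ⟨k, rfl⟩

/-- Semilinearity of `Algebra.TensorProduct.map f id` with respect to scalars. -/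
lemma aux_map_smul {C C' : Type u} [CommRing C] [CommRing C'] [Algebra A C] [Algebra A C']
    (f : C →ₐ[A] C') (c : C) (v : C ⊗[A] B) :
    Algebra.TensorProduct.map f (AlgHom.id A B) (c • v) =
      f c • Algebra.TensorProduct.map f (AlgHom.id A B) v := by
  have h : (Algebra.TensorProduct.map f (AlgHom.id A B)) (algebraMap C (C ⊗[A] B) c) =
      algebraMap C' (C' ⊗[A] B) (f c) := by
    simp [Algebra.TensorProduct.algebraMap_apply]
  rw [Algebra.smul_def, map_mul, h, Algebra.smul_def]

set_option maxHeartbeats 2000000 in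
set_option synthInstance.maxHeartbeats 400000 in
/-- Nakayama-type lemma: if `Q` is a finite `R`-module with `L ⊗[R] Q = 0`
for a field `L`, then `Q` is killed by some `s` outside `ker (R → L)`. -/
lemma aux_nak {R : Type u} [CommRing R] {L : Type u} [Field L] [Algebra R L]
    (Q : Type u) [AddCommGroup Q] [Module R Q] [Module.Finite R Q]
    (hQ : Subsingleton (L ⊗[R] Q)) :
    ∃ s : R, s ∉ RingHom.ker (algebraMap R L) ∧ ∀ z : Q, s • z = 0 := by
  classical
  set q : Ideal R := RingHom.ker (algebraMap R L) with hq
  haveI hqp : q.IsPrime := RingHom.ker_isPrime _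
  letI : Algebra (R ⧸ q) L := (RingHom.kerLift (algebraMap R L)).toAlgebra
  haveI : IsScalarTower R (R ⧸ q) L := IsScalarTower.of_algebraMap_eq fun r => by
    rw [Ideal.Quotient.algebraMap_eq]
    exact (RingHom.kerLift_mk (algebraMap R L) r).symm
  have hinj : Function.Injective (algebraMap (R ⧸ q) L) :=
    RingHom.kerLift_injective (algebraMap R L)
  letI : Algebra (FractionRing (R ⧸ q)) L := (IsFractionRing.lift hinj).toAlgebra
  haveI : IsScalarTower (R ⧸ q) (FractionRing (R ⧸ q)) L :=
    IsScalarTower.of_algebraMap_eq fun x => (IsFractionRing.lift_algebraMap hinj x).symm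
  haveI : IsScalarTower R (FractionRing (R ⧸ q)) L := IsScalarTower.of_algebraMap_eq fun r => by
    rw [IsScalarTower.algebraMap_apply R (R ⧸ q) (FractionRing (R ⧸ q)) r,
      ← IsScalarTower.algebraMap_apply (R ⧸ q) (FractionRing (R ⧸ q)) L,
      ← IsScalarTower.algebraMap_apply R (R ⧸ q) L]
  haveI : Subsingleton (L ⊗[FractionRing (R ⧸ q)] (FractionRing (R ⧸ q) ⊗[R] Q)) :=
    (AlgebraTensorModule.cancelBaseChange R (FractionRing (R ⧸ q)) L L Q).toEquiv.injective.subsingleton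
  haveI hκQ : Subsingleton (FractionRing (R ⧸ q) ⊗[R] Q) :=
    Module.FaithfullyFlat.lTensor_reflects_triviality (FractionRing (R ⧸ q)) L _
  -- Step 1: every element of `Q` is, up to a unit at `q`, in `q • ⊤`.
  have h1 : ∀ z : Q, ∃ d, d ∉ q ∧ d • z ∈ q • (⊤ : Submodule R Q) := by
    intro z
    by_contra hcon
    push_neg at hcon
    have hθinj : Function.Injective
        (LinearMap.toSpanSingleton (R ⧸ q) ((R ⧸ q) ⊗[R] Q) ((1 : R ⧸ q) ⊗ₜ[R] z)) := by
      rw [injective_iff_map_eq_zero]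
      intro dq hdq
      obtain ⟨d, rfl⟩ := Ideal.Quotient.mk_surjective dq
      have h0 : (Ideal.Quotient.mk q d) ⊗ₜ[R] z = 0 := by
        have h0' : (Ideal.Quotient.mk q d) • ((1 : R ⧸ q) ⊗ₜ[R] z) = 0 := hdq
        rwa [smul_tmul', smul_eq_mul, mul_one] at h0'
      have h2 := congrArg (quotTensorEquivQuotSMul Q q) h0
      rw [quotTensorEquivQuotSMul_mk_tmul, map_zero] at h2
      have hmem : d • z ∈ q • (⊤ : Submodule R Q) := (Submodule.Quotient.mk_eq_zero _).mp h2
      have hd : d ∈ q := by by_contra hd; exact hcon d hd hmem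
      exact Ideal.Quotient.eq_zero_iff_mem.mpr hd
    have hinj2 := Module.Flat.lTensor_preserves_injective_linearMap
      (M := FractionRing (R ⧸ q)) _ hθinj
    haveI : Nontrivial (FractionRing (R ⧸ q) ⊗[R ⧸ q] (R ⧸ q)) :=
      (TensorProduct.rid (R ⧸ q) (FractionRing (R ⧸ q))).toEquiv.nontrivial
    haveI : Subsingleton (FractionRing (R ⧸ q) ⊗[R ⧸ q] ((R ⧸ q) ⊗[R] Q)) :=
      (AlgebraTensorModule.cancelBaseChange R (R ⧸ q) (FractionRing (R ⧸ q))
        (FractionRing (R ⧸ q)) Q).toEquiv.injective.subsingleton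
    obtain ⟨u1, u2, hu⟩ := exists_pair_ne (FractionRing (R ⧸ q) ⊗[R ⧸ q] (R ⧸ q))
    exact hu (hinj2 (Subsingleton.elim _ _))
  -- Step 2: localize at `q` and apply Nakayama.
  haveI : Module.Finite (Localization q.primeCompl) (LocalizedModule q.primeCompl Q) :=
    Module.Finite.of_isLocalizedModule q.primeCompl (LocalizedModule.mkLinearMap q.primeCompl Q)
  have hle : (⊤ : Submodule (Localization q.primeCompl) (LocalizedModule q.primeCompl Q)) ≤
      (IsLocalRing.maximalIdeal (Localization q.primeCompl)) • ⊤ := by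
    rintro w -
    induction w using LocalizedModule.induction_on with
    | h z s =>
      have h2 : LocalizedModule.mk z s =
          Localization.mk 1 s • LocalizedModule.mk z (1 : q.primeCompl) := by
        rw [LocalizedModule.mk_smul_mk, one_smul, mul_one]
      rw [h2]
      refine Submodule.smul_mem _ _ ?_
      obtain ⟨d, hd, hdz⟩ := h1 z
      have h4 : LocalizedModule.mk (d • z) (1 : q.primeCompl) ∈
          (IsLocalRing.maximalIdeal (Localization q.primeCompl)) •
            (⊤ : Submodule (Localization q.primeCompl) (LocalizedModule q.primeCompl Q)) := by
        refine Submodule.smul_induction_on hdz ?_ ?_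
        · intro r hr nn _
          have h5 : LocalizedModule.mk (r • nn) (1 : q.primeCompl) =
              algebraMap R (Localization q.primeCompl) r •
                LocalizedModule.mk nn (1 : q.primeCompl) := by
            rw [algebraMap_smul, LocalizedModule.smul'_mk]
          rw [h5]
          exact Submodule.smul_mem_smul
            ((IsLocalization.AtPrime.to_map_mem_maximal_iff _ q r).mpr hr) Submodule.mem_top
        · intro x y hx hy
          have h6 : LocalizedModule.mk (x + y) (1 : q.primeCompl) =
              LocalizedModule.mk x (1 : q.primeCompl) + LocalizedModule.mk y (1 : q.primeCompl) :=
            map_add (LocalizedModule.mkLinearMap q.primeCompl Q) x y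
          rw [h6]; exact Submodule.add_mem _ hx hy
      have hu : IsUnit (algebraMap R (Localization q.primeCompl) d) :=
        IsLocalization.map_units _ (⟨d, hd⟩ : q.primeCompl)
      have h3 : algebraMap R (Localization q.primeCompl) d •
          LocalizedModule.mk z (1 : q.primeCompl) = LocalizedModule.mk (d • z) (1 : q.primeCompl) := by
        rw [algebraMap_smul, LocalizedModule.smul'_mk]
      have h7 : ((hu.unit⁻¹ : _) : Localization q.primeCompl) •
          LocalizedModule.mk (d • z) (1 : q.primeCompl) =
            LocalizedModule.mk z (1 : q.primeCompl) := by
        rw [← h3, smul_smul, IsUnit.val_inv_mul, one_smul]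
      rw [← h7]
      exact Submodule.smul_mem _ _ h4
  have htop : (⊤ : Submodule (Localization q.primeCompl) (LocalizedModule q.primeCompl Q)) = ⊥ :=
    Submodule.eq_bot_of_le_smul_of_le_jacobson_bot _ ⊤ Module.Finite.fg_top hle
      (by rw [IsLocalRing.jacobson_eq_maximalIdeal (⊥ : Ideal (Localization q.primeCompl))
        bot_ne_top])
  haveI : Subsingleton (LocalizedModule q.primeCompl Q) := by
    refine ⟨fun a b => ?_⟩
    have ha : a ∈ (⊥ : Submodule (Localization q.primeCompl) (LocalizedModule q.primeCompl Q)) :=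
      htop ▸ Submodule.mem_top
    have hb : b ∈ (⊥ : Submodule (Localization q.primeCompl) (LocalizedModule q.primeCompl Q)) :=
      htop ▸ Submodule.mem_top
    rw [Submodule.mem_bot] at ha hb
    rw [ha, hb]
  have hann : ∀ z : Q, ∃ r ∉ q, r • z = 0 :=
    Module.notMem_support_iff'.mp
      (Module.notMem_support_iff (p := ⟨q, hqp⟩).mpr ‹_›)
  obtain ⟨t, m, hm⟩ := Module.Finite.exists_fin (R := R) (M := Q)
  choose r hr hr0 using fun i => hann (m i)
  refine ⟨∏ i, r i, fun hmem => (q.primeCompl.prod_mem fun i _ => hr i) hmem, fun z => ?_⟩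
  have hz : z ∈ Submodule.span R (Set.range m) := hm ▸ Submodule.mem_top
  induction hz using Submodule.span_induction with
  | mem w hw =>
      obtain ⟨i, rfl⟩ := hw
      rw [← Finset.prod_erase_mul Finset.univ r (Finset.mem_univ i), mul_smul, hr0 i, smul_zero]
  | zero => rw [smul_zero]
  | add x y hx hy ihx ihy => rw [smul_add, ihx, ihy, add_zero]
  | smul a x hx ih => rw [smul_comm, ih, smul_zero]

end Aux

set_option maxHeartbeats 2000000 in
set_option synthInstance.maxHeartbeats 400000 in
/-- The key fiberwise statement: if the base change of `B` to some field `L` (an `A`-algebra)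
is spanned by the powers of `∑ cᵢ ⊗ bᵢ`, then there is an element `g` of the ideal of
"monogenicity" over `MvPolynomial (Fin n) A` which does not vanish at `c`. -/
lemma aux_exists_ann {A B : Type u} [CommRing A] [CommRing B] [Algebra A B]
    {n : ℕ} {b : Fin n → B} (hb : Submodule.span A (Set.range b) = ⊤)
    (L : Type u) [Field L] [Algebra A L] {c : Fin n → L}
    (hc : Submodule.span L (Set.range fun k : ℕ => (∑ i, c i ⊗ₜ[A] b i) ^ k) = ⊤) :
    ∃ g : MvPolynomial (Fin n) A,
      (∀ w : MvPolynomial (Fin n) A ⊗[A] B,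
        g • w ∈ Submodule.span (MvPolynomial (Fin n) A)
          (Set.range fun k : ℕ =>
            (∑ i, (MvPolynomial.X i : MvPolynomial (Fin n) A) ⊗ₜ[A] b i) ^ k)) ∧
      MvPolynomial.aeval c g ≠ 0 := by
  classical
  set R := MvPolynomial (Fin n) A with hR
  set ξ : R ⊗[A] B := ∑ i, (MvPolynomial.X i : R) ⊗ₜ[A] b i with hξ
  set S : Submodule R (R ⊗[A] B) := Submodule.span R (Set.range fun k : ℕ => ξ ^ k) with hS
  set ψ : R →ₐ[A] L := MvPolynomial.aeval c with hψ
  letI : Algebra R L := ψ.toRingHom.toAlgebra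
  haveI : IsScalarTower A R L := IsScalarTower.of_algebraMap_eq fun a => (ψ.commutes a).symm
  set Θ : R ⊗[A] B →ₐ[A] L ⊗[A] B := Algebra.TensorProduct.map ψ (AlgHom.id A B) with hΘ
  have hΘξ : Θ ξ = ∑ i, c i ⊗ₜ[A] b i := by
    rw [hξ, map_sum]
    refine Finset.sum_congr rfl fun i _ => ?_
    rw [Algebra.TensorProduct.map_tmul, hψ, MvPolynomial.aeval_X]
    rfl
  haveI : Module.Finite R (R ⊗[A] B) :=
    Module.Finite.of_fg_top (Submodule.fg_def.mpr ⟨_, Set.finite_range _, aux_span_tmul_top hb R⟩)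
  haveI hsub : Subsingleton (L ⊗[R] ((R ⊗[A] B) ⧸ S)) := by
    set e2 := AlgebraTensorModule.cancelBaseChange A R L L B with he2
    have heΘ : ∀ w : R ⊗[A] B, e2 ((1 : L) ⊗ₜ[R] w) = Θ w := by
      intro w
      induction w using TensorProduct.induction_on with
      | zero => rw [TensorProduct.tmul_zero, map_zero, map_zero]
      | tmul r β =>
          rw [AlgebraTensorModule.cancelBaseChange_tmul, Algebra.TensorProduct.map_tmul,
            Algebra.smul_def, mul_one]
          rfl
      | add x y hx hy => rw [TensorProduct.tmul_add, map_add, map_add, hx, hy]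
    have hsp : Submodule.span L (Set.range fun k : ℕ => (1 : L) ⊗ₜ[R] (ξ ^ k)) = ⊤ := by
      rw [eq_top_iff]
      rintro v -
      have hmem : e2 v ∈ Submodule.span L (Set.range fun k : ℕ =>
          (∑ i, c i ⊗ₜ[A] b i) ^ k) := hc ▸ Submodule.mem_top
      have hpull : ∀ u ∈ Submodule.span L (Set.range fun k : ℕ => (∑ i, c i ⊗ₜ[A] b i) ^ k),
          e2.symm u ∈ Submodule.span L (Set.range fun k : ℕ => (1 : L) ⊗ₜ[R] (ξ ^ k)) := by
        intro u hu
        induction hu using Submodule.span_induction with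
        | mem w hw =>
            obtain ⟨k, rfl⟩ := hw
            have he : (∑ i, c i ⊗ₜ[A] b i) ^ k = e2 ((1 : L) ⊗ₜ[R] (ξ ^ k)) := by
              rw [heΘ, map_pow, hΘξ]
            show e2.symm ((∑ i, c i ⊗ₜ[A] b i) ^ k) ∈ _
            rw [he, LinearEquiv.symm_apply_apply]
            exact Submodule.subset_span ⟨k, rfl⟩
        | zero => rw [map_zero]; exact zero_mem _
        | add x y hx hy ihx ihy => rw [map_add]; exact add_mem ihx ihy
        | smul a x hx ih => rw [map_smul]; exact Submodule.smul_mem _ _ ih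
      have := hpull _ hmem
      rwa [LinearEquiv.symm_apply_apply] at this
    have hbc : Function.Surjective (LinearMap.baseChange L S.mkQ) := by
      intro u
      induction u using TensorProduct.induction_on with
      | zero => exact ⟨0, map_zero _⟩
      | tmul l qq =>
          obtain ⟨w, rfl⟩ := Submodule.mkQ_surjective S qq
          exact ⟨l ⊗ₜ w, by rw [LinearMap.baseChange_tmul]⟩
      | add x y hx hy =>
          obtain ⟨vx, rfl⟩ := hx
          obtain ⟨vy, rfl⟩ := hy
          exact ⟨vx + vy, map_add _ _ _⟩
    refine subsingleton_of_forall_eq 0 fun u => ?_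
    obtain ⟨v, rfl⟩ := hbc u
    have hv : v ∈ Submodule.span L (Set.range fun k : ℕ => (1 : L) ⊗ₜ[R] (ξ ^ k)) :=
      hsp ▸ Submodule.mem_top
    induction hv using Submodule.span_induction with
    | mem w hw =>
        obtain ⟨k, rfl⟩ := hw
        rw [LinearMap.baseChange_tmul]
        have h0 : S.mkQ (ξ ^ k) = 0 :=
          (Submodule.Quotient.mk_eq_zero S).mpr (Submodule.subset_span ⟨k, rfl⟩)
        rw [h0, TensorProduct.tmul_zero]
    | zero => rw [map_zero]
    | add x y hx hy ihx ihy => rw [map_add, ihx, ihy, add_zero]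
    | smul a x hx ih => rw [map_smul, ih, smul_zero]
  obtain ⟨s, hs1, hs2⟩ := aux_nak ((R ⊗[A] B) ⧸ S) hsub
  refine ⟨s, fun w => ?_, fun h0 => hs1 ?_⟩
  · have h2 := hs2 (Submodule.Quotient.mk w)
    rw [← Submodule.Quotient.mk_smul, Submodule.Quotient.mk_eq_zero] at h2
    exact h2
  · exact RingHom.mem_ker.mpr h0

set_option maxHeartbeats 2000000 in
set_option synthInstance.maxHeartbeats 400000 in
/-- If `B` is a finite `A`-algebra and there is an `A`-algebra `A'` with
`Spec A' → Spec A` surjective such that `A' ⊗[A] B` is a simple `A'`-algebra, then `B`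
is locally simple over `A` (flatness of the base change is superfluous). -/
theorem isLocallySimple_of_specSurjective_simple {A B : Type u} [CommRing A] [CommRing B]
    [Algebra A B] [Module.Finite A B] (A' : Type u) [CommRing A'] [Algebra A A']
    (hsurj : Function.Surjective (PrimeSpectrum.comap (algebraMap A A')))
    (hsimple : ∃ x : A' ⊗[A] B, Algebra.adjoin A' {x} = ⊤) :
    Algebra.IsLocallySimple A B := by
  classical
  obtain ⟨n, b, hb⟩ := Module.Finite.exists_fin (R := A) (M := B)
  set R := MvPolynomial (Fin n) A with hR
  set ξ : R ⊗[A] B := ∑ i, (MvPolynomial.X i : R) ⊗ₜ[A] b i with hξ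
  set S : Submodule R (R ⊗[A] B) := Submodule.span R (Set.range fun k : ℕ => ξ ^ k) with hS
  -- Step 1 : for every maximal ideal, produce an annihilating `g` with a coefficient not in it
  have L3 : ∀ (p : Ideal A), p.IsMaximal →
      ∃ g : R, (∀ w : R ⊗[A] B, g • w ∈ S) ∧ ∃ d, MvPolynomial.coeff d g ∉ p := by
    intro p hp
    haveI := hp.isPrime
    obtain ⟨p', hp'⟩ := hsurj ⟨p, hp.isPrime⟩
    obtain ⟨x, hx⟩ := hsimple
    haveI := p'.2
    set L := FractionRing (A' ⧸ p'.asIdeal) with hL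
    have hcomap : Ideal.comap (algebraMap A A') p'.asIdeal = p := by
      have h := congrArg PrimeSpectrum.asIdeal hp'
      rwa [PrimeSpectrum.comap_asIdeal] at h
    haveI : IsScalarTower A A' L := IsScalarTower.of_algebraMap_eq fun a => by
      rw [IsScalarTower.algebraMap_apply A (A' ⧸ p'.asIdeal) L a,
        IsScalarTower.algebraMap_apply A A' (A' ⧸ p'.asIdeal) a,
        ← IsScalarTower.algebraMap_apply A' (A' ⧸ p'.asIdeal) L]
    have hker : ∀ a : A, algebraMap A L a = 0 ↔ a ∈ p := by
      intro a
      rw [IsScalarTower.algebraMap_apply A A' L a,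
        IsScalarTower.algebraMap_apply A' (A' ⧸ p'.asIdeal) L,
        map_eq_zero_iff _ (IsFractionRing.injective (A' ⧸ p'.asIdeal) L),
        Ideal.Quotient.algebraMap_eq, Ideal.Quotient.eq_zero_iff_mem, ← hcomap,
        Ideal.mem_comap]
    set μ : A' ⊗[A] B →ₐ[A] L ⊗[A] B :=
      Algebra.TensorProduct.map (IsScalarTower.toAlgHom A A' L) (AlgHom.id A B) with hμ
    have hμspan : Submodule.span L (Set.range fun k : ℕ => (μ x) ^ k) = ⊤ := by
      rw [eq_top_iff]
      rintro z -
      have h1b : ∀ i, (1 : L) ⊗ₜ[A] b i ∈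
          Submodule.span L (Set.range fun k : ℕ => (μ x) ^ k) := by
        intro i
        have hx' : (1 : A') ⊗ₜ[A] b i ∈
            Submodule.span A' (Set.range fun k : ℕ => x ^ k) :=
          (aux_span_pow hx) ▸ Submodule.mem_top
        have hpush : ∀ w ∈ Submodule.span A' (Set.range fun k : ℕ => x ^ k),
            μ w ∈ Submodule.span L (Set.range fun k : ℕ => (μ x) ^ k) := by
          intro w hw
          induction hw using Submodule.span_induction with
          | mem v hv => obtain ⟨k, rfl⟩ := hv; rw [map_pow]; exact Submodule.subset_span ⟨k, rfl⟩
          | zero => rw [map_zero]; exact zero_mem _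
          | add x' y hx' hy ihx ihy => rw [map_add]; exact add_mem ihx ihy
          | smul a w hw ih => rw [aux_map_smul]; exact Submodule.smul_mem _ _ ih
        have h2 := hpush _ hx'
        rwa [hμ, Algebra.TensorProduct.map_tmul, map_one] at h2
      have hz : z ∈ Submodule.span L (Set.range fun i => (1 : L) ⊗ₜ[A] b i) :=
        aux_span_tmul_top hb L ▸ Submodule.mem_top
      refine Submodule.span_le.mpr ?_ hz
      rintro w ⟨i, rfl⟩
      exact h1b i
    have hx2 : μ x ∈ Submodule.span L (Set.range fun i => (1 : L) ⊗ₜ[A] b i) :=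
      aux_span_tmul_top hb L ▸ Submodule.mem_top
    obtain ⟨c, hcc⟩ := (Submodule.mem_span_range_iff_exists_fun L).mp hx2
    have hcx : ∑ i, c i ⊗ₜ[A] b i = μ x := by
      rw [← hcc]
      refine Finset.sum_congr rfl fun i _ => ?_
      rw [smul_tmul', smul_eq_mul, mul_one]
    rw [← hcx] at hμspan
    obtain ⟨g, hg1, hg2⟩ := aux_exists_ann hb L hμspan
    refine ⟨g, hg1, ?_⟩
    by_contra hall
    push_neg at hall
    apply hg2
    rw [MvPolynomial.as_sum g, map_sum]
    refine Finset.sum_eq_zero fun d _ => ?_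
    rw [MvPolynomial.aeval_monomial, (hker _).mpr (hall d), zero_mul]
  -- Step 2 : extract finitely many coefficients generating the unit ideal
  set cset : Set A := {a : A | ∃ g : R, (∀ w : R ⊗[A] B, g • w ∈ S) ∧
    ∃ d, MvPolynomial.coeff d g = a} with hcset_def
  have hcset : Ideal.span cset = ⊤ := by
    by_contra hne
    obtain ⟨m, hm, hle⟩ := Ideal.exists_le_maximal _ hne
    obtain ⟨g, hg, d, hd⟩ := L3 m hm
    exact hd (hle (Ideal.subset_span ⟨g, hg, d, rfl⟩))
  have h1 : (1 : A) ∈ Submodule.span A cset := by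
    have : (1 : A) ∈ Ideal.span cset := by rw [hcset]; exact Submodule.mem_top
    exact this
  rw [Submodule.mem_span_set] at h1
  obtain ⟨co, hsup, hsum⟩ := h1
  have hchoice : ∀ a ∈ cset, ∃ g : R, (∀ w : R ⊗[A] B, g • w ∈ S) ∧
      ∃ d, MvPolynomial.coeff d g = a := fun a ha => ha
  choose! g hgS d hd using hchoice
  set l := co.support.toList with hl_def
  have hlc : ∀ a ∈ l, a ∈ cset := fun a ha => hsup (Finset.mem_toList.mp ha)
  set G : Polynomial R :=
    ∑ j : Fin l.length, Polynomial.C (g (l.get j)) * Polynomial.X ^ (j : ℕ) with hG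
  have hGcoeff : ∀ j : Fin l.length, G.coeff (j : ℕ) = g (l.get j) := by
    intro j
    rw [hG, Polynomial.finset_sum_coeff]
    rw [Finset.sum_eq_single j]
    · rw [Polynomial.coeff_C_mul, Polynomial.coeff_X_pow, if_pos rfl, mul_one]
    · intro j' _ hj'
      rw [Polynomial.coeff_C_mul, Polynomial.coeff_X_pow,
        if_neg (fun h => hj' (Fin.ext h.symm)), mul_zero]
    · intro h; exact absurd (Finset.mem_univ j) h
  have hGmem : G ∈ Ideal.map (Polynomial.C : R →+* Polynomial R) (S.colon ⊤) := by
    rw [hG]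
    refine Submodule.sum_mem _ fun j _ => ?_
    refine Ideal.mul_mem_right _ _ (Ideal.mem_map_of_mem _ ?_)
    exact Submodule.mem_colon.mpr fun w _ => hgS (l.get j) (hlc _ (List.get_mem l j)) w
  -- the faithfully flat algebra
  refine ⟨Localization.Away G, inferInstance, inferInstance, ?_, ?_⟩
  · -- faithfully flat
    haveI hf1 : Module.Flat A R := Module.Flat.of_free (R := A) (M := R)
    haveI hfree : Module.Free R (Polynomial R) := Module.Free.of_basis (Polynomial.basisMonomials R)
    haveI hf2 : Module.Flat R (Polynomial R) := Module.Flat.of_free (R := R) (M := Polynomial R)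
    haveI hf3 : Module.Flat A (Polynomial R) := Module.Flat.trans A R (Polynomial R)
    haveI hf4 : Module.Flat A (Localization.Away G) :=
      Module.Flat.trans A (Polynomial R) (Localization.Away G)
    refine Module.FaithfullyFlat.mk ?_
    intro m hm hcon
    haveI := hm
    set φm : Polynomial R →+* Polynomial (MvPolynomial (Fin n) (A ⧸ m)) :=
      Polynomial.mapRingHom (MvPolynomial.map (Ideal.Quotient.mk m)) with hφm
    have hex : ∃ a ∈ co.support, a ∉ m := by
      by_contra hall
      push_neg at hall
      have h1m : (1 : A) ∈ m := by
        rw [← hsum]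
        refine Submodule.sum_mem _ fun a ha => ?_
        exact Ideal.mul_mem_left _ _ (hall a ha)
      exact hm.ne_top (Ideal.eq_top_of_isUnit_mem _ h1m isUnit_one)
    obtain ⟨a0, ha0sup, ha0m⟩ := hex
    obtain ⟨j0, hj0⟩ := List.mem_iff_get.mp (Finset.mem_toList.mpr ha0sup)
    have hGne : φm G ≠ 0 := by
      intro h0
      have h1' := congrArg (fun qq => Polynomial.coeff qq (j0 : ℕ)) h0
      simp only [hφm, Polynomial.coe_mapRingHom, Polynomial.coeff_map, Polynomial.coeff_zero]
        at h1'
      rw [hGcoeff j0, hj0] at h1'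
      have h2' := congrArg (MvPolynomial.coeff (d a0)) h1'
      rw [MvPolynomial.coeff_map, MvPolynomial.coeff_zero,
        hd a0 (hlc _ (hj0 ▸ List.get_mem l j0)), Ideal.Quotient.eq_zero_iff_mem] at h2'
      exact ha0m h2'
    haveI : Nontrivial (Localization.Away (φm G)) := by
      have hinj := IsLocalization.injective (M := Submonoid.powers (φm G))
        (Localization.Away (φm G)) (powers_le_nonZeroDivisors_of_noZeroDivisors hGne)
      exact hinj.nontrivial
    have hle2 : Submonoid.powers G ≤ Submonoid.comap φm (Submonoid.powers (φm G)) := by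
      rintro y ⟨k, rfl⟩
      exact ⟨k, (map_pow φm G k).symm⟩
    set χ : Localization.Away G →+* Localization.Away (φm G) :=
      IsLocalization.map _ φm hle2 with hχ
    have hχcomp : ∀ z : Polynomial R,
        χ (algebraMap (Polynomial R) (Localization.Away G) z) =
          algebraMap _ (Localization.Away (φm G)) (φm z) := fun z =>
      RingHom.congr_fun (IsLocalization.map_comp hle2) z
    have hkill : ∀ a ∈ m, ∀ w : Localization.Away G, χ (a • w) = 0 := by
      intro a ha w
      rw [Algebra.smul_def, map_mul]
      have hz : χ (algebraMap A (Localization.Away G) a) = 0 := by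
        rw [IsScalarTower.algebraMap_apply A (Polynomial R) (Localization.Away G) a, hχcomp]
        have hφ0 : φm (algebraMap A (Polynomial R) a) = 0 := by
          have hmk : Ideal.Quotient.mk m a = 0 := Ideal.Quotient.eq_zero_iff_mem.mpr ha
          rw [IsScalarTower.algebraMap_apply A R (Polynomial R) a, Polynomial.algebraMap_eq,
            MvPolynomial.algebraMap_eq]
          simp only [hφm, Polynomial.coe_mapRingHom, Polynomial.map_C]
          rw [MvPolynomial.map_C, hmk, map_zero, map_zero]
        rw [hφ0, map_zero]
      rw [hz, zero_mul]
    have h1'' : (1 : Localization.Away G) ∈ m • (⊤ : Submodule A (Localization.Away G)) := by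
      rw [hcon]; exact Submodule.mem_top
    have hzero : χ (1 : Localization.Away G) = 0 :=
      Submodule.smul_induction_on h1'' (fun a ha w _ => hkill a ha w)
        (fun x y hx hy => by rw [map_add, hx, hy, add_zero])
    rw [map_one] at hzero
    exact one_ne_zero hzero
  · -- simple after base change
    set Ξ : R ⊗[A] B →ₐ[A] (Localization.Away G) ⊗[A] B :=
      Algebra.TensorProduct.map (IsScalarTower.toAlgHom A R (Localization.Away G))
        (AlgHom.id A B) with hΞ
    refine ⟨Ξ ξ, ?_⟩
    rw [← Algebra.toSubmodule_eq_top, eq_top_iff]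
    rintro z -
    have hsemi : ∀ (r : R) (w : R ⊗[A] B),
        Ξ (r • w) = algebraMap R (Localization.Away G) r • Ξ w := fun r w => by
      rw [hΞ]
      exact (aux_map_smul _ r w).trans (by rw [IsScalarTower.toAlgHom_apply])
    have hstepa : ∀ w ∈ S, Ξ w ∈
        Subalgebra.toSubmodule (Algebra.adjoin (Localization.Away G) {Ξ ξ}) := by
      intro w hw
      induction hw using Submodule.span_induction with
      | mem v hv =>
          obtain ⟨k, rfl⟩ := hv
          rw [map_pow]
          exact (Subalgebra.mem_toSubmodule _).mpr
            (pow_mem (Algebra.self_mem_adjoin_singleton _ _) k)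
      | zero => rw [map_zero]; exact zero_mem _
      | add x y hx hy ihx ihy => rw [map_add]; exact add_mem ihx ihy
      | smul r w hw ih => rw [hsemi]; exact Submodule.smul_mem _ _ ih
    have hΞ1 : ∀ i, Ξ ((1 : R) ⊗ₜ[A] b i) = (1 : Localization.Away G) ⊗ₜ[A] b i := by
      intro i
      rw [hΞ, Algebra.TensorProduct.map_tmul, map_one]
      rfl
    have hbstep : ∀ i, (1 : Localization.Away G) ⊗ₜ[A] b i ∈
        Subalgebra.toSubmodule (Algebra.adjoin (Localization.Away G) {Ξ ξ}) := by
      intro i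
      have hG1 : ∀ P ∈ Ideal.map (Polynomial.C : R →+* Polynomial R) (S.colon ⊤),
          (algebraMap (Polynomial R) (Localization.Away G)) P •
            ((1 : Localization.Away G) ⊗ₜ[A] b i) ∈
              Subalgebra.toSubmodule (Algebra.adjoin (Localization.Away G) {Ξ ξ}) := by
        intro P hP
        induction hP using Submodule.span_induction with
        | mem v hv =>
            obtain ⟨gg, hgg, rfl⟩ := hv
            have hC : algebraMap (Polynomial R) (Localization.Away G) (Polynomial.C gg) =
                algebraMap R (Localization.Away G) gg := by
              rw [IsScalarTower.algebraMap_apply R (Polynomial R) (Localization.Away G),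
                Polynomial.algebraMap_eq]
            rw [hC, ← hΞ1 i, ← hsemi]
            exact hstepa _ (Submodule.mem_colon.mp hgg _ trivial)
        | zero => rw [map_zero, zero_smul]; exact zero_mem _
        | add x y hx hy ihx ihy => rw [map_add, add_smul]; exact add_mem ihx ihy
        | smul p P hP ih => rw [smul_eq_mul, map_mul, mul_smul]; exact Submodule.smul_mem _ _ ih
      have hunit : algebraMap (Polynomial R) (Localization.Away G) G *
          IsLocalization.Away.invSelf (S := Localization.Away G) G = 1 := IsLocalization.Away.mul_invSelf G
      have hrw : (1 : Localization.Away G) ⊗ₜ[A] b i =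
          (IsLocalization.Away.invSelf (S := Localization.Away G) G) •
            ((algebraMap (Polynomial R) (Localization.Away G) G) •
              ((1 : Localization.Away G) ⊗ₜ[A] b i)) := by
        rw [smul_smul, mul_comm, hunit, one_smul]
      rw [hrw]
      exact Submodule.smul_mem _ _ (hG1 G hGmem)
    have hz : z ∈ Submodule.span (Localization.Away G)
        (Set.range fun i => (1 : Localization.Away G) ⊗ₜ[A] b i) :=
      aux_span_tmul_top hb (Localization.Away G) ▸ Submodule.mem_top
    refine Submodule.span_le.mpr ?_ hz
    rintro w ⟨i, rfl⟩
    exact hbstep i
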